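/- Let B be a binary matrix and let J be a set of column indices with a(J) < |J| that is minimal with this property, i.e., no proper subset J' ⊊ J satisfies a(J') < |J'|. Then J is a stopping set of B: no row of B has exactly one entry equal to 1 among the columns of J. Consequently, every set J of columns with a(J) < |J| contains a nonempty subset J' that is a stopping set and satisfies a(J') < |J'|. -/

import Mathlib

/-- The number of rows of `B` that are active on the column set `J`. -/
def activeCard {r n : ℕ} (B : Matrix (Fin r) (Fin n) Bool) (J : Finset (Fin n)) : ℕ :=
  (@Finset.filter (Fin r) (fun i : Fin r => ∃ j ∈ J, B i j = true)
    (fun _ => Finset.decidableExistsAndFinset) Finset.univ).card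

lemma minimal_deficient_stopping_aux {r n : ℕ}
    (B : Matrix (Fin r) (Fin n) Bool) (J : Finset (Fin n))
    (hdef : activeCard B J < J.card)
    (hmin : ∀ J' : Finset (Fin n), J' ⊂ J → ¬ activeCard B J' < J'.card)
    (i : Fin r) : (J.filter fun j => B i j = true).card ≠ 1 := by
  intro h1
  obtain ⟨j, hj⟩ := Finset.card_eq_one.mp h1
  have hjJ : j ∈ J ∧ B i j = true := by
    have := hj ▸ Finset.mem_singleton_self j
    simpa [Finset.mem_filter] using this
  have huniq : ∀ k ∈ J, B i k = true → k = j := by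
    intro k hk hbk
    have : k ∈ J.filter fun j => B i j = true := Finset.mem_filter.mpr ⟨hk, hbk⟩
    simpa [hj] using this
  set J' := J.erase j with hJ'
  have hsub : J' ⊂ J := Finset.erase_ssubset hjJ.1
  have hcard : J'.card = J.card - 1 := Finset.card_erase_of_mem hjJ.1
  -- row i is active on J
  have hiact : i ∈ @Finset.filter (Fin r) (fun i' : Fin r => ∃ k ∈ J, B i' k = true) (fun _ => Finset.decidableExistsAndFinset) Finset.univ :=
    (@Finset.mem_filter _ _ (fun _ => Finset.decidableExistsAndFinset) _ _).mpr ⟨Finset.mem_univ i, j, hjJ.1, hjJ.2⟩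
  -- active rows on J' are contained in active rows on J minus i
  have hss : (@Finset.filter (Fin r) (fun i' : Fin r => ∃ k ∈ J', B i' k = true) (fun _ => Finset.decidableExistsAndFinset) Finset.univ) ⊆
      (@Finset.filter (Fin r) (fun i' : Fin r => ∃ k ∈ J, B i' k = true) (fun _ => Finset.decidableExistsAndFinset) Finset.univ).erase i := by
    intro i' hi'
    obtain ⟨-, k, hkJ', hbk⟩ := (@Finset.mem_filter _ _ (fun _ => Finset.decidableExistsAndFinset) _ _).mp hi'
    have hkJ : k ∈ J := Finset.mem_of_mem_erase hkJ'
    refine Finset.mem_erase.mpr ⟨?_, (@Finset.mem_filter _ _ (fun _ => Finset.decidableExistsAndFinset) _ _).mpr ⟨Finset.mem_univ i', k, hkJ, hbk⟩⟩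
    rintro rfl
    exact (Finset.ne_of_mem_erase hkJ') (huniq k hkJ hbk)
  have hle : activeCard B J' ≤ activeCard B J - 1 := by
    have := Finset.card_le_card hss
    rwa [Finset.card_erase_of_mem hiact] at this
  have hpos : 1 ≤ activeCard B J := Finset.card_pos.mpr ⟨i, hiact⟩
  have : activeCard B J' < J'.card := by omega
  exact hmin J' hsub this

theorem minimal_deficient_is_stopping_and_contains_stopping {r n : ℕ}
    (B : Matrix (Fin r) (Fin n) Bool) :
    (∀ J : Finset (Fin n), activeCard B J < J.card →
      (∀ J' : Finset (Fin n), J' ⊂ J → ¬ activeCard B J' < J'.card) →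
      ∀ i : Fin r, (J.filter fun j => B i j = true).card ≠ 1) ∧
    (∀ J : Finset (Fin n), activeCard B J < J.card →
      ∃ J' ⊆ J, J'.Nonempty ∧
        (∀ i : Fin r, (J'.filter fun j => B i j = true).card ≠ 1) ∧
        activeCard B J' < J'.card) := by
  constructor
  · exact minimal_deficient_stopping_aux B
  · intro J
    induction J using Finset.strongInductionOn with
    | _ J ih =>
      intro hdef
      by_cases h : ∃ J'' ⊂ J, activeCard B J'' < J''.card
      · obtain ⟨J'', hss, hd⟩ := h
        obtain ⟨J', hsub, hne, hstop, hd'⟩ := ih J'' hss hd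
        exact ⟨J', hsub.trans hss.subset, hne, hstop, hd'⟩
      · push_neg at h
        refine ⟨J, le_refl J, ?_, minimal_deficient_stopping_aux B J hdef (fun J' hs => not_lt.mpr (h J' hs)), hdef⟩
        exact Finset.card_pos.mp (by omega)
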